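/- For every λ ∈ ℂ with λ ≠ 1, every integer n ≥ 1, and all x, the identity x^{n-1} = (1-λ)^{-n} · Σ_{k=0}^{n} Σ_{l=0}^{n-1} Σ_{l₁+⋯+l_n = l} C(l; l₁,…,l_n) · ( Π_{i=1}^{n} H_{l_i}(λ) ) · C(n, k) · C(n-1, l) · (-λ)^{n-k} · (x+k)^{n-1-l} holds as an identity of polynomials in x, where the inner sum is over all n-tuples (l₁,…,l_n) of nonnegative integers summing to l and C(l; l₁,…,l_n) = l!/(l₁!⋯l_n!) is the multinomial coefficient. -/

import Mathlib

/-- The formal power series `e^{ct} = ∑_{m≥0} c^m t^m / m!` over `ℂ`. -/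
noncomputable def expPS (c : ℂ) : PowerSeries ℂ :=
  PowerSeries.mk fun m => c ^ m / (m.factorial : ℂ)

open PowerSeries Finset


lemma expPS_eq (c : ℂ) : expPS c = rescale c (PowerSeries.exp ℂ) := by
  ext m
  simp [expPS, coeff_rescale, PowerSeries.coeff_exp, div_eq_mul_inv, mul_comm]

lemma coeff_expPS (c : ℂ) (m : ℕ) : PowerSeries.coeff m (expPS c) = c ^ m / m.factorial := by
  simp [expPS]

lemma expPS_mul (a b : ℂ) : expPS a * expPS b = expPS (a + b) := by
  simp [expPS_eq, PowerSeries.exp_mul_exp_eq_exp_add]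

lemma expPS_pow (k : ℕ) : (expPS 1) ^ k = expPS (k : ℂ) := by
  have h1 : expPS 1 = PowerSeries.exp ℂ := by
    rw [expPS_eq, rescale_one]; rfl
  rw [h1, PowerSeries.exp_pow_eq_rescale_exp, expPS_eq]

lemma binom_expand (lam x : ℂ) (n : ℕ) :
    (expPS 1 - PowerSeries.C lam) ^ n * expPS x =
      ∑ k ∈ range (n + 1),
        PowerSeries.C ((n.choose k : ℂ) * (-lam) ^ (n - k)) * expPS (x + k) := by
  rw [sub_eq_add_neg, add_pow, Finset.sum_mul]
  refine Finset.sum_congr rfl fun k hk => ?_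
  have h1 : ((-PowerSeries.C lam) ^ (n - k)) = PowerSeries.C ((-lam) ^ (n - k)) := by
    rw [← map_neg, ← map_pow]
  have h2 : ((n.choose k : ℂ⟦X⟧)) = PowerSeries.C ((n.choose k : ℂ)) := by
    simp
  rw [h1, h2, expPS_pow, ← expPS_mul x k, map_mul]
  ring

lemma coeff_F_pow (H : ℕ → ℂ) (n l : ℕ) :
    PowerSeries.coeff l ((PowerSeries.mk fun m => H m / (m.factorial : ℂ)) ^ n) =
      (∑ t ∈ Finset.Nat.antidiagonalTuple n l,
        (Nat.multinomial Finset.univ t : ℂ) * ∏ i : Fin n, H (t i)) / l.factorial := by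
  have h0 : (PowerSeries.mk fun m => H m / (m.factorial : ℂ)) ^ n =
      ∏ _i : Fin n, PowerSeries.mk fun m => H m / (m.factorial : ℂ) := by
    simp
  rw [h0, PowerSeries.coeff_prod, Finset.sum_div]
  refine Finset.sum_nbij' (i := fun d => ⇑d)
    (j := fun t => Finsupp.equivFunOnFinite.symm t) ?_ ?_ ?_ ?_ ?_
  · intro d hd
    simp only [Finset.mem_finsuppAntidiag] at hd
    rw [Finset.Nat.mem_antidiagonalTuple]
    exact hd.1
  · intro t ht
    rw [Finset.Nat.mem_antidiagonalTuple] at ht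
    simp only [Finset.mem_finsuppAntidiag]
    exact ⟨by simpa using ht, Finset.subset_univ _⟩
  · intro d _; exact Finsupp.equivFunOnFinite.symm_apply_apply d
  · intro t _; rfl
  · intro d hd
    simp only [Finset.mem_finsuppAntidiag] at hd
    simp only [PowerSeries.coeff_mk]
    rw [Finset.prod_div_distrib]
    have hspec : ((∏ i : Fin n, ((d i).factorial : ℂ)) *
        (Nat.multinomial Finset.univ ⇑d : ℂ)) = (l.factorial : ℂ) := by
      rw [← hd.1]
      exact_mod_cast congrArg (Nat.cast (R := ℂ)) (Nat.multinomial_spec Finset.univ ⇑d)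
    have hne : (∏ i : Fin n, ((d i).factorial : ℂ)) ≠ 0 :=
      Finset.prod_ne_zero_iff.2 fun i _ => Nat.cast_ne_zero.2 (Nat.factorial_ne_zero _)
    have hlne : (l.factorial : ℂ) ≠ 0 := Nat.cast_ne_zero.2 (Nat.factorial_ne_zero _)
    field_simp
    rw [← hspec]
    ring


/-- For `λ ≠ 1`, `n ≥ 1` and all `x`,
`x^{n-1} = (1-λ)^{-n} ∑_{k=0}^{n} ∑_{l=0}^{n-1} ∑_{l₁+⋯+l_n = l}
  C(l; l₁,…,l_n) (∏_{i=1}^{n} H_{l_i}(λ)) C(n,k) C(n-1,l) (-λ)^{n-k} (x+k)^{n-1-l}`,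
where the Frobenius–Euler numbers `H_m(λ)` are characterized by
`(1-λ)/(e^t-λ) = ∑_m H_m(λ) t^m/m!`, i.e. `(e^t-λ) ∑_m H_m(λ) t^m/m! = 1-λ`, and
`C(l; l₁,…,l_n)` is the multinomial coefficient. -/
theorem stmt12 (lam : ℂ) (hlam : lam ≠ 1) (n : ℕ) (hn : 1 ≤ n)
    (H : ℕ → ℂ)
    (hH : (expPS 1 - PowerSeries.C lam) *
          PowerSeries.mk (fun m => H m / (m.factorial : ℂ)) =
        PowerSeries.C (1 - lam)) :
    ∀ x : ℂ,
      x ^ (n - 1) =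
        ((1 - lam) ^ n)⁻¹ *
          ∑ k ∈ Finset.range (n + 1), ∑ l ∈ Finset.range n,
            ∑ t ∈ Finset.Nat.antidiagonalTuple n l,
              (Nat.multinomial Finset.univ t : ℂ) * (∏ i : Fin n, H (t i)) *
                (n.choose k : ℂ) * ((n - 1).choose l : ℂ) * (-lam) ^ (n - k) *
                (x + k) ^ (n - 1 - l) := by
  intro x
  set N := n - 1 with hNdef
  have hNn : N + 1 = n := Nat.succ_pred_eq_of_pos hn
  have hsub : (1 : ℂ) - lam ≠ 0 := sub_ne_zero.2 (Ne.symm hlam)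
  have hpow : ((1 : ℂ) - lam) ^ n ≠ 0 := pow_ne_zero _ hsub
  have hNfac : ((N.factorial : ℂ)) ≠ 0 := Nat.cast_ne_zero.2 (Nat.factorial_ne_zero _)
  set F := PowerSeries.mk fun m => H m / (m.factorial : ℂ) with hFdef
  have hkey : PowerSeries.C ((1 - lam) ^ n) * expPS x =
      F ^ n * ∑ k ∈ range (n + 1),
        PowerSeries.C ((n.choose k : ℂ) * (-lam) ^ (n - k)) * expPS (x + k) := by
    rw [← binom_expand, ← mul_assoc, mul_comm (F ^ n), ← mul_pow, hH, ← map_pow]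
  have hc := congrArg (PowerSeries.coeff N) hkey
  rw [PowerSeries.coeff_C_mul, coeff_expPS, PowerSeries.coeff_mul,
    Finset.Nat.sum_antidiagonal_eq_sum_range_succ_mk, Nat.succ_eq_add_one, hNn] at hc
  simp only [map_sum, PowerSeries.coeff_C_mul, coeff_expPS, hFdef, coeff_F_pow] at hc
  -- abbreviate the inner multinomial sum
  set S : ℕ → ℂ := fun l => ∑ t ∈ Finset.Nat.antidiagonalTuple n l,
    (Nat.multinomial Finset.univ t : ℂ) * ∏ i : Fin n, H (t i) with hSdef
  have hgoal : (∑ k ∈ Finset.range (n + 1), ∑ l ∈ Finset.range n,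
      ∑ t ∈ Finset.Nat.antidiagonalTuple n l,
        (Nat.multinomial Finset.univ t : ℂ) * (∏ i : Fin n, H (t i)) *
          (n.choose k : ℂ) * ((n - 1).choose l : ℂ) * (-lam) ^ (n - k) *
          (x + k) ^ (n - 1 - l)) = (1 - lam) ^ n * x ^ N := by
    rw [Finset.sum_comm]
    have hstep : ∀ l ∈ Finset.range n, ∀ k ∈ Finset.range (n + 1),
        (∑ t ∈ Finset.Nat.antidiagonalTuple n l,
          (Nat.multinomial Finset.univ t : ℂ) * (∏ i : Fin n, H (t i)) *
            (n.choose k : ℂ) * ((n - 1).choose l : ℂ) * (-lam) ^ (n - k) *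
            (x + k) ^ (n - 1 - l))
        = (N.factorial : ℂ) * (S l / l.factorial *
            ((n.choose k : ℂ) * (-lam) ^ (n - k) * ((x + k) ^ (N - l) / ((N - l).factorial : ℂ)))) := by
      intro l hl k _
      have hlN : l ≤ N := by have := Finset.mem_range.mp hl; omega
      have hchoose : ((N.choose l : ℂ)) = (N.factorial : ℂ) / ((l.factorial : ℂ) * ((N - l).factorial : ℂ)) :=
        Nat.cast_choose ℂ hlN
      have hfl : ((l.factorial : ℂ)) ≠ 0 := Nat.cast_ne_zero.2 (Nat.factorial_ne_zero _)
      have hfNl : (((N - l).factorial : ℂ)) ≠ 0 := Nat.cast_ne_zero.2 (Nat.factorial_ne_zero _)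
      have : (∑ t ∈ Finset.Nat.antidiagonalTuple n l,
          (Nat.multinomial Finset.univ t : ℂ) * (∏ i : Fin n, H (t i)) *
            (n.choose k : ℂ) * ((n - 1).choose l : ℂ) * (-lam) ^ (n - k) *
            (x + k) ^ (n - 1 - l))
          = S l * ((n.choose k : ℂ) * ((N.choose l : ℂ)) * (-lam) ^ (n - k) * (x + k) ^ (N - l)) := by
        rw [hSdef, Finset.sum_mul]
        exact Finset.sum_congr rfl fun t _ => by ring
      rw [this, hchoose]
      field_simp
    rw [Finset.sum_congr rfl (fun l hl => Finset.sum_congr rfl (hstep l hl))]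
    simp only [← Finset.mul_sum]
    rw [← hc]
    field_simp
  rw [hgoal, ← mul_assoc, inv_mul_cancel₀ hpow, one_mul]
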